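/- arXiv:1601.03186 — 3 statements merged into one kernel-verified Lean document; each statement's English description precedes it below -/
import Mathlib

section
/- Let κ* ∈ (−1, 0]. Then for every y ≥ 0, the value g(y)/(1+κ*) lies in the range (−∞, g(0)] of g, so x(y) := g⁻¹(g(y)/(1+κ*)) is well defined, and there exists a constant K ≥ 0 such that −K ≤ (1/g(y))·g⁻¹(g(y)/(1+κ*)) ≤ 0 for every y ≥ 0; that is, this nonpositive function of y is bounded on [0,∞). -/
open Set

/-- For `κ* ∈ (−1, 0]`, the value `g(y)/(1+κ*)` lies in the range `(−∞, g(0)]` of `g`,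
and the nonpositive function `y ↦ (1/g(y))·g⁻¹(g(y)/(1+κ*))` is bounded on `[0, ∞)`. -/
theorem stmt_7 (q : ℝ) (hq : 0 < q) (g : ℝ → ℝ)
    (hg_cont : ContinuousOn g (Ici 0))
    (hg_anti : StrictAntiOn g (Ici 0))
    (hg_neg : ∀ y ∈ Ici (0 : ℝ), g y < 0)
    (hg_le : ∀ y ∈ Ici (0 : ℝ), g y ≤ -(y ^ (1 + q)))
    (hbij : Set.BijOn g (Ici 0) (Iic (g 0)))
    (ginv : ℝ → ℝ) (hinv : Set.InvOn ginv g (Ici 0) (Iic (g 0)))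
    (κs : ℝ) (hκ₁ : -1 < κs) (hκ₂ : κs ≤ 0) :
    (∀ y ∈ Ici (0 : ℝ), g y / (1 + κs) ≤ g 0) ∧
      ∃ K : ℝ, 0 ≤ K ∧ ∀ y ∈ Ici (0 : ℝ),
        -K ≤ 1 / g y * ginv (g y / (1 + κs)) ∧ 1 / g y * ginv (g y / (1 + κs)) ≤ 0 := by
  have hc : (0:ℝ) < 1 + κs := by linarith
  have hq1 : (0:ℝ) < 1 + q := by linarith
  set r : ℝ := (1 + q)⁻¹ with hr
  have hr0 : 0 < r := by positivity
  have hr1 : r ≤ 1 := by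
    rw [hr]
    rw [inv_le_one_iff₀]
    right; linarith
  have hg0 : g 0 < 0 := hg_neg 0 self_mem_Ici
  set m : ℝ := -g 0 with hm
  have hm0 : 0 < m := by simp [hm]; linarith
  have hle0 : ∀ y ∈ Ici (0:ℝ), g y ≤ g 0 := by
    intro y hy
    exact hg_anti.antitoneOn self_mem_Ici hy hy
  have hmem : ∀ y ∈ Ici (0:ℝ), g y / (1 + κs) ≤ g 0 := by
    intro y hy
    have := hg_neg y hy
    have h2 := hle0 y hy
    rw [div_le_iff₀ hc]
    nlinarith
  refine ⟨hmem, (m / (1 + κs)) ^ r / m, by positivity, ?_⟩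
  intro y hy
  have hgy : g y < 0 := hg_neg y hy
  have hty : m ≤ -g y := by
    have := hle0 y hy; simp [hm]; linarith
  have ht0 : 0 < -g y := by linarith
  -- get the preimage
  obtain ⟨w, hw, hgw⟩ := hbij.surjOn (show g y / (1 + κs) ∈ Iic (g 0) from hmem y hy)
  have hginv : ginv (g y / (1 + κs)) = w := by
    rw [← hgw, hinv.1 hw]
  rw [hginv]
  have hw0 : (0:ℝ) ≤ w := hw
  -- w ≤ ((-g y)/(1+κs))^r
  have hwp : w ^ (1 + q) ≤ (-g y) / (1 + κs) := by
    have h1 := hg_le w hw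
    rw [hgw] at h1
    have : g y / (1 + κs) ≤ -(w ^ (1 + q)) := h1
    rw [neg_div]
    linarith
  have hwle : w ≤ ((-g y) / (1 + κs)) ^ r := by
    have h2 : (w ^ (1 + q)) ^ r ≤ ((-g y) / (1 + κs)) ^ r :=
      Real.rpow_le_rpow (Real.rpow_nonneg hw0 _) hwp hr0.le
    rwa [← Real.rpow_mul hw0, mul_inv_cancel₀ hq1.ne', Real.rpow_one] at h2
  -- ((-g y)/(1+κs))^r ≤ K * (-g y)
  have hKt : ((-g y) / (1 + κs)) ^ r ≤ ((m / (1 + κs)) ^ r / m) * (-g y) := by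
    have hsplit : (-g y) / (1 + κs) = (m / (1 + κs)) * ((-g y) / m) := by
      field_simp; try ring
    rw [hsplit, Real.mul_rpow (by positivity) (by positivity)]
    have h1 : (1:ℝ) ≤ (-g y) / m := (one_le_div hm0).2 hty
    have h2 : ((-g y) / m) ^ r ≤ (-g y) / m := by
      have := Real.rpow_le_rpow_of_exponent_le h1 hr1
      rwa [Real.rpow_one] at this
    calc (m / (1 + κs)) ^ r * ((-g y) / m) ^ r
        ≤ (m / (1 + κs)) ^ r * ((-g y) / m) := by
          exact mul_le_mul_of_nonneg_left h2 (by positivity)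
      _ = ((m / (1 + κs)) ^ r / m) * (-g y) := by field_simp; try ring
  have hkey : w ≤ ((m / (1 + κs)) ^ r / m) * (-g y) := hwle.trans hKt
  constructor
  · have heq : 1 / g y * w = -(w / (-g y)) := by field_simp
    rw [heq, neg_le_neg_iff, div_le_iff₀ ht0]
    linarith [hkey]
  · have : 1 / g y ≤ 0 := by
      apply div_nonpos_of_nonneg_of_nonpos <;> linarith
    exact mul_nonpos_of_nonpos_of_nonneg this hw0
end

section
/- Fix y ≥ 0 and κ > −1 such that g(y)/(1+κ) ≤ g(0), and set u* := g⁻¹(g(y)/(1+κ)) − y. Then u* ≥ −y and u* is a global minimizer on [−y, ∞) of the function u ↦ Θ(y+u) − Θ(y) − (1/g(y))·(1+κ)·u; that is, for every u ≥ −y, Θ(y+u) − (1/g(y))·(1+κ)·u ≥ Θ(y+u*) − (1/g(y))·(1+κ)·u*. -/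
open MeasureTheory Set

lemma stmt8_integrable (q : ℝ) (hq : 0 < q) (g : ℝ → ℝ)
    (hg_cont : ContinuousOn g (Ici 0))
    (hg_neg : ∀ y ∈ Ici (0 : ℝ), g y < 0)
    (hg_le : ∀ y ∈ Ici (0 : ℝ), g y ≤ -(y ^ (1 + q)))
    (x : ℝ) (hx : 0 ≤ x) :
    IntegrableOn (fun u => -1 / g u) (Ici x) := by
  set M := max x 1 with hM
  have hxM : x ≤ M := le_max_left _ _
  have hM0 : (0:ℝ) < M := lt_of_lt_of_le one_pos (le_max_right _ _)
  have hcont : ContinuousOn (fun u => -1 / g u) (Ici 0) :=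
    continuousOn_const.div hg_cont (fun u hu => (hg_neg u hu).ne)
  have h1 : IntegrableOn (fun u => -1 / g u) (Icc x M) :=
    (hcont.mono (Icc_subset_Ici_self.trans (Ici_subset_Ici.mpr hx))).integrableOn_Icc
  have h2 : IntegrableOn (fun u => -1 / g u) (Ioi M) := by
    have hbound : IntegrableOn (fun u : ℝ => u ^ (-(1+q))) (Ioi M) :=
      integrableOn_Ioi_rpow_of_lt (by linarith) hM0
    have hmeas : AEStronglyMeasurable (fun u => -1 / g u) (volume.restrict (Ioi M)) :=
      (hcont.mono (fun u hu => le_of_lt (lt_of_lt_of_le hM0 (le_of_lt hu)))).aestronglyMeasurable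
        measurableSet_Ioi
    refine Integrable.mono hbound hmeas ?_
    rw [ae_restrict_iff' measurableSet_Ioi]
    filter_upwards with u hu
    have hu0 : (0:ℝ) < u := lt_trans hM0 hu
    have hgu : g u < 0 := hg_neg u (le_of_lt hu0)
    have hrp : (0:ℝ) < u ^ (1+q) := Real.rpow_pos_of_pos hu0 _
    have hle : u ^ (1+q) ≤ -g u := by
      have := hg_le u (le_of_lt hu0); linarith
    have hng : 0 < -g u := neg_pos.mpr hgu
    have h1 : ‖-1 / g u‖ = 1 / (-g u) := by
      have heq : -1 / g u = 1 / (-g u) := by rw [div_neg, neg_div]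
      rw [heq, Real.norm_eq_abs, abs_of_pos (one_div_pos.mpr hng)]
    have h2 : ‖u ^ (-(1+q))‖ = 1 / u ^ (1+q) := by
      rw [Real.norm_eq_abs, abs_of_pos (Real.rpow_pos_of_pos hu0 _),
        Real.rpow_neg (le_of_lt hu0), inv_eq_one_div]
    rw [h1, h2]
    exact one_div_le_one_div_of_le hrp hle
  have := h1.union h2
  rwa [Icc_union_Ioi_eq_Ici hxM] at this

/-- `u* := g⁻¹(g(y)/(1+κ)) − y` satisfies `u* ≥ −y` and is a global minimizer on
`[−y, ∞)` of `u ↦ Θ(y+u) − Θ(y) − (1/g(y))·(1+κ)·u`. -/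
theorem stmt_8 (q : ℝ) (hq : 0 < q) (g : ℝ → ℝ)
    (hg_cont : ContinuousOn g (Ici 0))
    (hg_anti : StrictAntiOn g (Ici 0))
    (hg_neg : ∀ y ∈ Ici (0 : ℝ), g y < 0)
    (hg_le : ∀ y ∈ Ici (0 : ℝ), g y ≤ -(y ^ (1 + q)))
    (hbij : Set.BijOn g (Ici 0) (Iic (g 0)))
    (ginv : ℝ → ℝ) (hinv : Set.InvOn ginv g (Ici 0) (Iic (g 0)))
    (Θ : ℝ → ℝ) (hΘ : ∀ x ∈ Ici (0 : ℝ), Θ x = ∫ u in Ici x, -1 / g u)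
    (y κ : ℝ) (hy : 0 ≤ y) (hκ : -1 < κ) (hrange : g y / (1 + κ) ≤ g 0) :
    -y ≤ ginv (g y / (1 + κ)) - y ∧
      ∀ u : ℝ, -y ≤ u →
        Θ (y + (ginv (g y / (1 + κ)) - y)) - Θ y -
            1 / g y * (1 + κ) * (ginv (g y / (1 + κ)) - y)
          ≤ Θ (y + u) - Θ y - 1 / g y * (1 + κ) * u := by
  have hκ0 : (0:ℝ) < 1 + κ := by linarith
  set c := g y / (1 + κ) with hc
  have hgy : g y < 0 := hg_neg y hy
  have hc0 : c < 0 := div_neg_of_neg_of_pos hgy hκ0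
  obtain ⟨z, hz0, hzc⟩ := hbij.surjOn hrange
  have hxstar : ginv c = z := by rw [← hzc, hinv.1 hz0]
  have hx0 : (0:ℝ) ≤ ginv c := hxstar ▸ hz0
  have hgx : g (ginv c) = c := by rw [hxstar, hzc]
  have hanti := hg_anti.antitoneOn
  have hΘdiff : ∀ a b : ℝ, 0 ≤ a → 0 ≤ b → Θ a - Θ b = ∫ u in b..a, 1 / g u := by
    have key : ∀ a b : ℝ, 0 ≤ b → b ≤ a → Θ a - Θ b = ∫ u in b..a, 1 / g u := by
      intro a b hb hba
      have ha : 0 ≤ a := hb.trans hba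
      rw [hΘ a (mem_Ici.mpr ha), hΘ b (mem_Ici.mpr hb)]
      have hIb := stmt8_integrable q hq g hg_cont hg_neg hg_le b hb
      have hIa := stmt8_integrable q hq g hg_cont hg_neg hg_le a ha
      have hioc : IntegrableOn (fun u => -1 / g u) (Ioc b a) :=
        hIb.mono_set (fun t ht => le_of_lt ht.1)
      have hioi : IntegrableOn (fun u => -1 / g u) (Ioi a) :=
        hIa.mono_set Ioi_subset_Ici_self
      rw [integral_Ici_eq_integral_Ioi, integral_Ici_eq_integral_Ioi,
        ← Ioc_union_Ioi_eq_Ioi hba,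
        setIntegral_union (Ioc_disjoint_Ioi le_rfl) measurableSet_Ioi hioc hioi,
        intervalIntegral.integral_of_le hba]
      have hcg : ∀ u ∈ Ioc b a, (1:ℝ) / g u = -(-1 / g u) := by
        intro u _; ring
      rw [setIntegral_congr_fun measurableSet_Ioc hcg, integral_neg]
      ring
    intro a b ha hb
    rcases le_total b a with h | h
    · exact key a b hb h
    · have := key b a ha h
      rw [intervalIntegral.integral_symm]
      linarith
  have hcontg : ∀ a b : ℝ, 0 ≤ a → 0 ≤ b →
      IntervalIntegrable (fun t => 1 / g t) volume a b := by
    intro a b ha hb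
    have hsub : uIcc a b ⊆ Ici 0 := fun t ht => le_trans (le_min ha hb) ht.1
    exact (continuousOn_const.div (hg_cont.mono hsub)
      (fun t ht => (hg_neg t (hsub ht)).ne)).intervalIntegrable
  refine ⟨by linarith, ?_⟩
  intro u hu
  set x := y + u with hxdef
  have hx : (0:ℝ) ≤ x := by rw [hxdef]; linarith
  have hxs : y + (ginv c - y) = ginv c := by ring
  rw [hxs]
  have hcoef : 1 / g y * (1 + κ) = 1 / c := by
    rw [hc]; field_simp
  rw [hcoef]
  have hkey : ∫ t in (ginv c)..x, (1/c : ℝ) ≤ ∫ t in (ginv c)..x, 1 / g t := by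
    rcases le_total (ginv c) x with h | h
    · apply intervalIntegral.integral_mono_on h intervalIntegrable_const
        (hcontg _ _ hx0 hx)
      intro t ht
      have ht0 : (0:ℝ) ≤ t := le_trans hx0 ht.1
      have hgt : g t ≤ c := by
        rw [← hgx]; exact hanti (mem_Ici.mpr hx0) (mem_Ici.mpr ht0) ht.1
      exact one_div_le_one_div_of_neg_of_le hc0 hgt
    · rw [intervalIntegral.integral_symm, intervalIntegral.integral_symm x (ginv c)]
      apply neg_le_neg
      apply intervalIntegral.integral_mono_on h (hcontg _ _ hx hx0)
        intervalIntegrable_const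
      intro t ht
      have ht0 : (0:ℝ) ≤ t := le_trans hx ht.1
      have hgt : c ≤ g t := by
        rw [← hgx]; exact hanti (mem_Ici.mpr ht0) (mem_Ici.mpr hx0) ht.2
      exact one_div_le_one_div_of_neg_of_le (hg_neg t ht0) hgt
  have hdiff2 := hΘdiff x (ginv c) hx hx0
  have hconst' : ∫ t in (ginv c)..x, (1/c:ℝ) = (x - ginv c) * (1/c) := by
    rw [intervalIntegral.integral_const, smul_eq_mul]
  have hstep : (x - ginv c) * (1/c) ≤ Θ x - Θ (ginv c) := by
    rw [hdiff2]; linarith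
  have hexp : 1/c * u - 1/c * (ginv c - y) = (x - ginv c) * (1/c) := by
    rw [hxdef]; ring
  linarith
end

section
/- Let S ⊆ ℝ^d be a closed set, let β : ℝ^d → ℝ^d satisfy ‖β(x) − β(x')‖ ≤ K‖x − x'‖ for all x, x' (with K ≥ 0), and let ν > 0 be such that: (i) for every x ∈ S, x + β(x) ∈ S; and (ii) for every x in the topological boundary ∂S of S, the distance from x + β(x) to ∂S is at least ν. Let ε > 0 with (1+K)ε < ν. If z ∉ S and there exists x ∈ ∂S with ‖z − x‖ ≤ ε, then z + β(z) ∈ S. -/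
open Set

/-- Geometric core of Lemma 4.2: under the invariance conditions (E) on the closed set `S`
and the Lipschitz jump map `β`, a point `z ∉ S` at distance at most `ε` from the boundary
of `S` (with `(1+K)ε < ν`) is sent into `S` by the jump, i.e. `z + β z ∈ S`. -/
theorem stmt_10 {d : ℕ} (S : Set (EuclideanSpace ℝ (Fin d))) (hS : IsClosed S)
    (β : EuclideanSpace ℝ (Fin d) → EuclideanSpace ℝ (Fin d))
    (K : ℝ) (hK : 0 ≤ K)
    (hβ : ∀ x x', ‖β x - β x'‖ ≤ K * ‖x - x'‖)
    (ν : ℝ) (hν : 0 < ν)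
    (hS_inv : ∀ x ∈ S, x + β x ∈ S)
    (hbd : ∀ x ∈ frontier S, ν ≤ Metric.infDist (x + β x) (frontier S))
    (ε : ℝ) (hε : 0 < ε) (hεν : (1 + K) * ε < ν)
    (z : EuclideanSpace ℝ (Fin d)) (hz : z ∉ S)
    (x : EuclideanSpace ℝ (Fin d)) (hx : x ∈ frontier S) (hzx : ‖z - x‖ ≤ ε) :
    z + β z ∈ S := by
  by_contra hcon
  have hxS : x ∈ S := hS.frontier_subset hx
  have ha : x + β x ∈ S := hS_inv x hxS
  have hSne : S ≠ univ := fun h => hz (h ▸ mem_univ z)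
  obtain ⟨y, hyf, hyd⟩ := exists_mem_frontier_infDist_compl_eq_dist ha hSne
  -- distance from x+βx to z+βz is small
  have hdist : dist (x + β x) (z + β z) ≤ (1 + K) * ε := by
    have : (x + β x) - (z + β z) = (x - z) + (β x - β z) := by abel
    rw [dist_eq_norm, this]
    calc ‖(x - z) + (β x - β z)‖ ≤ ‖x - z‖ + ‖β x - β z‖ := norm_add_le _ _
      _ ≤ ‖x - z‖ + K * ‖x - z‖ := by linarith [hβ x z]
      _ = (1 + K) * ‖x - z‖ := by ring
      _ ≤ (1 + K) * ε := by
          have : ‖x - z‖ ≤ ε := by rwa [norm_sub_rev]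
          nlinarith
  have h1 : ν ≤ dist (x + β x) y :=
    (hbd x hx).trans (Metric.infDist_le_dist_of_mem hyf)
  have h2 : Metric.infDist (x + β x) Sᶜ ≤ (1 + K) * ε :=
    (Metric.infDist_le_dist_of_mem (Set.mem_compl hcon)).trans hdist
  rw [hyd] at h2
  linarith
end
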